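/- Let R be a commutative ring, let R' be a flat commutative R-algebra, let B, C, K be commutative R-algebras, and let f : B → K and g : C → K be R-algebra homomorphisms with g surjective. Let A = B ×_K C = {(b,c) ∈ B × C : f(b) = g(c)} be the fiber product R-algebra. Then the natural R'-algebra homomorphism A ⊗_R R' → (B ⊗_R R') ×_{K ⊗_R R'} (C ⊗_R R') is bijective, where the target is the fiber product of B ⊗_R R' and C ⊗_R R' over K ⊗_R R' along the base-changed maps f ⊗ id and g ⊗ id. -/

import Mathlib

open TensorProduct

universe u

set_option maxHeartbeats 1000000 in
/-- Let `R' ` be a flat `R`-algebra, let `f : B → K` and `g : C → K` be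
`R`-algebra homomorphisms with `g` surjective, and let `A = B ×_K C` be the fiber product
`R`-algebra.  Then the natural map `A ⊗[R] R' → (B ⊗[R] R') ×_{K ⊗[R] R'} (C ⊗[R] R')` is
bijective: it is injective and its range is exactly the fiber product of `B ⊗[R] R'` and
`C ⊗[R] R'` over `K ⊗[R] R'` along the base-changed maps. -/
theorem fiberProduct_tensor_flat_baseChange
    (R R' B C K : Type u) [CommRing R] [CommRing R'] [CommRing B] [CommRing C] [CommRing K]
    [Algebra R R'] [Module.Flat R R'] [Algebra R B] [Algebra R C] [Algebra R K]
    (f : B →ₐ[R] K) (g : C →ₐ[R] K) (hg : Function.Surjective g) :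
    let A : Subalgebra R (B × C) :=
      AlgHom.equalizer (f.comp (AlgHom.fst R B C)) (g.comp (AlgHom.snd R B C))
    let ψ : A ⊗[R] R' →ₐ[R] (B ⊗[R] R') × (C ⊗[R] R') :=
      AlgHom.prod
        (Algebra.TensorProduct.map ((AlgHom.fst R B C).comp A.val) (AlgHom.id R R'))
        (Algebra.TensorProduct.map ((AlgHom.snd R B C).comp A.val) (AlgHom.id R R'))
    Function.Injective ψ ∧
      Set.range ψ = {x : (B ⊗[R] R') × (C ⊗[R] R') |
        Algebra.TensorProduct.map f (AlgHom.id R R') x.1 =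
          Algebra.TensorProduct.map g (AlgHom.id R R') x.2} := by
  intro A ψ
  set ι : A →ₗ[R] B × C := A.val.toLinearMap with hι
  set d : B × C →ₗ[R] K := f.toLinearMap ∘ₗ LinearMap.fst R B C
      - g.toLinearMap ∘ₗ LinearMap.snd R B C with hd
  have hexact : Function.Exact ι d := by
    intro x
    constructor
    · intro hx
      refine ⟨⟨x, ?_⟩, rfl⟩
      have : f x.1 - g x.2 = 0 := hx
      exact sub_eq_zero.mp this
    · rintro ⟨⟨a, ha⟩, rfl⟩
      have h1 : f a.1 = g a.2 := ha
      show f a.1 - g a.2 = 0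
      rw [h1, sub_self]
  have hexactT : Function.Exact (ι.rTensor R') (d.rTensor R') :=
    Module.Flat.rTensor_exact R' hexact
  have hιinj : Function.Injective (ι.rTensor R') :=
    Module.Flat.rTensor_preserves_injective_linearMap ι Subtype.val_injective
  set e := TensorProduct.prodLeft R R B C R' with he
  have heapp : ∀ (m : B × C) (r : R'), e (m ⊗ₜ r) = (m.1 ⊗ₜ r, m.2 ⊗ₜ r) := by
    rintro ⟨b, c⟩ r; rfl
  have hψ : ψ.toLinearMap = e.toLinearMap ∘ₗ ι.rTensor R' := by
    ext a r
    · simp [ψ, heapp, ι]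
    · simp [ψ, heapp, ι]
  have hψ' : ∀ t, ψ t = e (ι.rTensor R' t) := fun t => congrArg (fun L => L t) hψ
  have key : ((Algebra.TensorProduct.map f (AlgHom.id R R')).toLinearMap
        ∘ₗ LinearMap.fst R (B ⊗[R] R') (C ⊗[R] R')
      - (Algebra.TensorProduct.map g (AlgHom.id R R')).toLinearMap
        ∘ₗ LinearMap.snd R (B ⊗[R] R') (C ⊗[R] R')) ∘ₗ e.toLinearMap = d.rTensor R' := by
    apply TensorProduct.ext'
    rintro ⟨b, c⟩ r
    simp [hd, heapp, sub_tmul]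
  have hcond : ∀ x : (B ⊗[R] R') × (C ⊗[R] R'),
      d.rTensor R' (e.symm x) =
        Algebra.TensorProduct.map f (AlgHom.id R R') x.1 -
          Algebra.TensorProduct.map g (AlgHom.id R R') x.2 := by
    intro x
    have := congrArg (fun L => L (e.symm x)) key
    have h := this.symm
    simp at h
    exact h
  constructor
  · intro a b h
    apply hιinj
    apply e.injective
    rw [← hψ' a, ← hψ' b, h]
  · ext x
    simp only [Set.mem_range, Set.mem_setOf_eq]
    constructor
    · rintro ⟨t, rfl⟩
      have h0 : d.rTensor R' (ι.rTensor R' t) = 0 := hexactT.apply_apply_eq_zero t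
      rw [hψ' t]
      apply sub_eq_zero.mp
      have h2 := hcond (e (ι.rTensor R' t))
      rw [LinearEquiv.symm_apply_apply, h0] at h2
      exact h2.symm
    · intro hx
      have h0 : d.rTensor R' (e.symm x) = 0 := by rw [hcond x, hx, sub_self]
      obtain ⟨t, ht⟩ := (hexactT (e.symm x)).mp h0
      exact ⟨t, by rw [hψ' t, ht, LinearEquiv.apply_symm_apply]⟩
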